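/- Let F be a probability measure on (0,∞) with m_r := ∫ (log(1+u))^r F(du) < ∞ for some r > 1. Then for every 0 < η ≤ 1, the function x ↦ ∫₀^∞ ((log(x+u))^{rη} − (log x)^{rη}) F(du) is bounded on [e^{r−1}, ∞). -/

import Mathlib

open MeasureTheory

/-- derivative helper for `φ x = (p-1) log (log x) - log x` -/
lemma phi_hasDeriv (p : ℝ) {x : ℝ} (hx : 1 < x) :
    HasDerivAt (fun y => (p - 1) * Real.log (Real.log y) - Real.log y)
      ((p - 1) * ((Real.log x)⁻¹ * x⁻¹) - x⁻¹) x := by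
  have hx0 : x ≠ 0 := by linarith
  have hlogpos : 0 < Real.log x := Real.log_pos hx
  have hlog : HasDerivAt Real.log x⁻¹ x := Real.hasDerivAt_log hx0
  have hll : HasDerivAt (fun y => Real.log (Real.log y)) ((Real.log x)⁻¹ * x⁻¹) x :=
    (Real.hasDerivAt_log hlogpos.ne').comp x hlog
  exact (hll.const_mul (p - 1)).sub hlog

lemma phi_anti (r p : ℝ) (hr : 1 < r) (hpr : p ≤ r) :
    AntitoneOn (fun y => (p - 1) * Real.log (Real.log y) - Real.log y)
      (Set.Ici (Real.exp (r - 1))) := by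
  have he0 : (1 : ℝ) < Real.exp (r - 1) := by
    rw [Real.one_lt_exp_iff]; linarith
  apply antitoneOn_of_deriv_nonpos (convex_Ici _)
  · intro x hx
    exact (phi_hasDeriv p (lt_of_lt_of_le he0 hx)).continuousAt.continuousWithinAt
  · intro x hx
    rw [interior_Ici] at hx
    exact (phi_hasDeriv p (he0.trans hx)).differentiableAt.differentiableWithinAt
  · intro x hx
    rw [interior_Ici] at hx
    have hx1 : 1 < x := he0.trans hx
    have hx0 : 0 < x := by linarith
    have hlog : r - 1 ≤ Real.log x := by
      rw [show r - 1 = Real.log (Real.exp (r - 1)) from (Real.log_exp _).symm]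
      exact Real.log_le_log (Real.exp_pos _) hx.le
    have hlogpos : 0 < Real.log x := by linarith
    rw [(phi_hasDeriv p hx1).deriv]
    have h1 : (p - 1) * (Real.log x)⁻¹ ≤ 1 := by
      rcases le_or_gt p 1 with hp | hp
      · have : (p - 1) * (Real.log x)⁻¹ ≤ 0 := by
          apply mul_nonpos_of_nonpos_of_nonneg <;> [linarith; positivity]
        linarith
      · rw [mul_inv_le_iff₀ hlogpos, one_mul]; linarith
    have : (p - 1) * ((Real.log x)⁻¹ * x⁻¹) ≤ 1 * x⁻¹ := by
      rw [← mul_assoc]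
      exact mul_le_mul_of_nonneg_right h1 (by positivity)
    linarith

lemma psi_le (r p : ℝ) (hr : 1 < r) (hpr : p ≤ r) {a b : ℝ}
    (ha : Real.exp (r - 1) ≤ a) (hab : a ≤ b) :
    Real.log b ^ (p - 1) * b⁻¹ ≤ Real.log a ^ (p - 1) * a⁻¹ := by
  have he0 : (1 : ℝ) < Real.exp (r - 1) := by rw [Real.one_lt_exp_iff]; linarith
  have key := phi_anti r p hr hpr ha (ha.trans hab) hab
  have hexp := Real.exp_le_exp.2 key
  have conv : ∀ c : ℝ, Real.exp (r - 1) ≤ c →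
      Real.exp ((p - 1) * Real.log (Real.log c) - Real.log c)
        = Real.log c ^ (p - 1) * c⁻¹ := by
    intro c hc
    have hc1 : 1 < c := he0.trans_le hc
    have hc0 : 0 < c := by linarith
    have hlogpos : 0 < Real.log c := Real.log_pos hc1
    rw [Real.exp_sub, Real.exp_log hc0, Real.rpow_def_of_pos hlogpos,
      mul_comm (Real.log (Real.log c)), div_eq_mul_inv]
  rwa [conv b (ha.trans hab), conv a ha] at hexp

/-- hasDerivAt helper for `x ↦ (log (x+u))^p - (log x)^p`. -/
lemma g_hasDeriv (p u : ℝ) (hu : 0 ≤ u) {x : ℝ} (hx : 1 < x) :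
    HasDerivAt (fun y => Real.log (y + u) ^ p - Real.log y ^ p)
      (p * Real.log (x + u) ^ (p - 1) * (x + u)⁻¹ - p * Real.log x ^ (p - 1) * x⁻¹) x := by
  have hxu : 1 < x + u := by linarith
  have base : ∀ c : ℝ, 1 < c → HasDerivAt (fun y => Real.log y ^ p)
      (p * Real.log c ^ (p - 1) * c⁻¹) c := by
    intro c hc
    have hlogpos : 0 < Real.log c := Real.log_pos hc
    exact (Real.hasDerivAt_rpow_const (p := p) (Or.inl hlogpos.ne')).comp c
      (Real.hasDerivAt_log (by linarith))
  have h1 : HasDerivAt (fun y : ℝ => y + u) 1 x := (hasDerivAt_id x).add_const u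
  have h2 : HasDerivAt (fun y => Real.log (y + u) ^ p)
      (p * Real.log (x + u) ^ (p - 1) * (x + u)⁻¹) x := by
    have := (base (x + u) hxu).comp x h1
    rw [mul_one] at this
    exact this
  exact h2.sub (base x hx)

/-- The increments of `x ↦ (log x)^p` are decreasing on `[e^{r-1}, ∞)`. -/
lemma incr_anti (r p u : ℝ) (hr : 1 < r) (hp : 0 < p) (hpr : p ≤ r) (hu : 0 ≤ u) :
    AntitoneOn (fun y => Real.log (y + u) ^ p - Real.log y ^ p)
      (Set.Ici (Real.exp (r - 1))) := by
  have he0 : (1 : ℝ) < Real.exp (r - 1) := by rw [Real.one_lt_exp_iff]; linarith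
  apply antitoneOn_of_deriv_nonpos (convex_Ici _)
  · intro x hx
    exact (g_hasDeriv p u hu (he0.trans_le hx)).continuousAt.continuousWithinAt
  · intro x hx
    rw [interior_Ici] at hx
    exact (g_hasDeriv p u hu (he0.trans hx)).differentiableAt.differentiableWithinAt
  · intro x hx
    rw [interior_Ici] at hx
    rw [(g_hasDeriv p u hu (he0.trans hx)).deriv]
    have := psi_le r p hr hpr (a := x) (b := x + u) hx.le (by linarith)
    have h2 : p * (Real.log (x + u) ^ (p - 1) * (x + u)⁻¹)
        ≤ p * (Real.log x ^ (p - 1) * x⁻¹) :=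
      mul_le_mul_of_nonneg_left this hp.le
    nlinarith [h2]

/-- If `F` is a probability measure on `(0,∞)` with finite log-moment
`m_r = ∫ (log(1+u))^r F(du) < ∞` for some `r > 1`, then for each `0 < η ≤ 1` the
function `x ↦ ∫ ((log(x+u))^{rη} − (log x)^{rη}) F(du)` is bounded on `[e^{r−1}, ∞)`. -/
theorem stmt_14 (F : Measure ℝ) [IsProbabilityMeasure F]
    (hsupp : F (Set.Iic 0) = 0)
    (r : ℝ) (hr : 1 < r)
    (hmom : Integrable (fun u => (Real.log (1 + u)) ^ r) F) :
    ∀ η : ℝ, 0 < η → η ≤ 1 →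
      ∃ C : ℝ, ∀ x : ℝ, Real.exp (r - 1) ≤ x →
        (∫ u, ((Real.log (x + u)) ^ (r * η) - (Real.log x) ^ (r * η)) ∂F) ≤ C := by
  intro η hη hη1
  set p := r * η with hpdef
  have hp : 0 < p := by positivity
  have hpr : p ≤ r := by nlinarith
  set e0 := Real.exp (r - 1) with he0def
  have he0 : (1 : ℝ) < e0 := by rw [he0def, Real.one_lt_exp_iff]; linarith
  have hloge0 : Real.log e0 = r - 1 := Real.log_exp _
  -- dominating function
  set G : ℝ → ℝ := fun u => 1 + 2 ^ r * ((r - 1) ^ r + Real.log (1 + u) ^ r) with hGdef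
  have hGint : Integrable G F := by
    apply Integrable.add (integrable_const _)
    exact ((integrable_const ((r - 1) ^ (r:ℝ))).add hmom).const_mul _
  have haeu : ∀ᵐ u ∂F, 0 < u := by
    rw [ae_iff]
    convert hsupp using 2
    ext u; simp [not_lt]
  refine ⟨∫ u, G u ∂F, fun x hx => ?_⟩
  have hx1 : 1 < x := he0.trans_le hx
  have hlogx : r - 1 ≤ Real.log x := by
    rw [← hloge0]; exact Real.log_le_log (Real.exp_pos _) hx
  have hlogxpos : 0 < Real.log x := by linarith
  apply integral_mono_of_nonneg _ hGint
  · -- pointwise bound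
    filter_upwards [haeu] with u hu
    have hxu : x ≤ x + u := by linarith
    -- step 1: decreasing increments
    have step1 : Real.log (x + u) ^ p - Real.log x ^ p
        ≤ Real.log (e0 + u) ^ p - Real.log e0 ^ p :=
      incr_anti r p u hr hp hpr hu.le (Set.self_mem_Ici) hx hx
    have hloge0u : 0 < Real.log (e0 + u) := Real.log_pos (by linarith)
    have he0p : (0:ℝ) ≤ Real.log e0 ^ p := Real.rpow_nonneg (by rw [hloge0]; linarith) _
    -- step 2: log(e0+u) ≤ (r-1) + log(1+u)
    have hB : 0 < Real.log (1 + u) := Real.log_pos (by linarith)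
    set B := Real.log (1 + u) with hBdef
    have step2 : Real.log (e0 + u) ≤ (r - 1) + B := by
      rw [hBdef, ← hloge0, ← Real.log_mul (by positivity) (by positivity)]
      apply Real.log_le_log (by linarith)
      nlinarith
    set s := (r - 1) + B with hsdef
    have hs0 : 0 ≤ s := by rw [hsdef]; nlinarith
    have step3 : Real.log (e0 + u) ^ p ≤ s ^ p :=
      Real.rpow_le_rpow hloge0u.le step2 hp.le
    have step4 : s ^ p ≤ 1 + s ^ r := by
      rcases le_or_gt s 1 with hs1 | hs1
      · have h1 : s ^ p ≤ 1 ^ p := Real.rpow_le_rpow hs0 hs1 hp.le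
        have h2 : (0:ℝ) ≤ s ^ r := Real.rpow_nonneg hs0 _
        rw [Real.one_rpow] at h1; linarith
      · have h1 : s ^ p ≤ s ^ r := Real.rpow_le_rpow_of_exponent_le hs1.le hpr
        linarith
    have step5 : s ^ r ≤ 2 ^ r * ((r - 1) ^ r + B ^ r) := by
      have hm : s ≤ 2 * max (r - 1) B := by
        rw [hsdef, two_mul]
        exact add_le_add (le_max_left _ _) (le_max_right _ _)
      have hmax0 : (0:ℝ) ≤ max (r - 1) B := le_trans (by linarith) (le_max_left _ _)
      have h1 : s ^ r ≤ (2 * max (r - 1) B) ^ r :=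
        Real.rpow_le_rpow hs0 hm (by linarith)
      have h2 : (2 * max (r - 1) B) ^ r = 2 ^ r * (max (r - 1) B) ^ r :=
        Real.mul_rpow (by norm_num) hmax0
      have h3 : (max (r - 1) B) ^ r ≤ (r - 1) ^ r + B ^ r := by
        rcases max_cases (r - 1) B with ⟨h, _⟩ | ⟨h, _⟩ <;> rw [h]
        · have : (0:ℝ) ≤ B ^ (r:ℝ) := Real.rpow_nonneg hB.le _
          linarith
        · have : (0:ℝ) ≤ (r - 1 : ℝ) ^ (r:ℝ) := Real.rpow_nonneg (by linarith) _
          linarith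
      have h4 : 2 ^ r * (max (r - 1) B) ^ r ≤ 2 ^ r * ((r - 1) ^ r + B ^ r) := by
        apply mul_le_mul_of_nonneg_left h3 (Real.rpow_nonneg (by norm_num) _)
      linarith
    calc Real.log (x + u) ^ p - Real.log x ^ p
        ≤ Real.log (e0 + u) ^ p - Real.log e0 ^ p := step1
      _ ≤ Real.log (e0 + u) ^ p := by linarith
      _ ≤ s ^ p := step3
      _ ≤ 1 + s ^ r := step4
      _ ≤ 1 + 2 ^ r * ((r - 1) ^ r + B ^ r) := by linarith
      _ = G u := rfl
  · -- nonnegativity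
    filter_upwards [haeu] with u hu
    have : Real.log x ^ p ≤ Real.log (x + u) ^ p :=
      Real.rpow_le_rpow hlogxpos.le (Real.log_le_log (by linarith) (by linarith)) hp.le
    simpa [sub_nonneg] using this
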